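/- Subcritical stabilization on ℤ^d. Let d ≥ 1 and let (s(x))_{x ∈ ℤ^d} be i.i.d. real random variables with E[|s(0)|] < ∞ and E[s(0)] < 1. Then almost surely s stabilizes under parallel toppling, i.e. almost surely u_∞(x) < ∞ for every x ∈ ℤ^d. -/

import Mathlib

open MeasureTheory ProbabilityTheory ENNReal

/-- The graph Laplacian on `ℤ^d`: `Δf(x) = (1/(2d)) Σ_{y ∼ x} (f(y) - f(x))`. -/
noncomputable def latLap (d : ℕ) (f : (Fin d → ℤ) → ℝ) (x : Fin d → ℤ) : ℝ :=
  (2 * (d : ℝ))⁻¹ * ∑ i : Fin d,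
    ((f (Function.update x i (x i + 1)) - f x) + (f (Function.update x i (x i - 1)) - f x))

/-- Parallel toppling on `ℤ^d`: `s_0 = s`, `s_{t+1} = s_t + Δ e_t`, `e_t(x) = max(s_t(x)-1, 0)`. -/
noncomputable def latConf (d : ℕ) (s : (Fin d → ℤ) → ℝ) : ℕ → (Fin d → ℤ) → ℝ
  | 0 => s
  | t + 1 => fun x =>
      latConf d s t x + latLap d (fun y => max (latConf d s t y - 1) 0) x

/-- The odometer at time `t`: `u_t = Σ_{i<t} e_i`. -/
noncomputable def latOdo (d : ℕ) (s : (Fin d → ℤ) → ℝ) (t : ℕ) (x : Fin d → ℤ) : ℝ :=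
  ∑ i ∈ Finset.range t, max (latConf d s i x - 1) 0

/-- `u_∞(x) = lim_{t→∞} u_t(x) ∈ [0,∞]` (the limit of the nondecreasing odometers). -/
noncomputable def latOdoInf (d : ℕ) (s : (Fin d → ℤ) → ℝ) (x : Fin d → ℤ) : ℝ≥0∞ :=
  ⨆ t : ℕ, ENNReal.ofReal (latOdo d s t x)

namespace SubSand

variable {d : ℕ}

abbrev Idx (d : ℕ) := Fin d → ℤ
abbrev Cfg (d : ℕ) := Idx d → ℝ

/-- excess at time t -/
noncomputable def exc (σ : Cfg d) (t : ℕ) (x : Idx d) : ℝ := max (latConf d σ t x - 1) 0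

def up (x : Idx d) (i : Fin d) : Idx d := Function.update x i (x i + 1)
def dn (x : Idx d) (i : Fin d) : Idx d := Function.update x i (x i - 1)

noncomputable def inflow (σ : Cfg d) (t : ℕ) (x : Idx d) : ℝ :=
  (2 * (d : ℝ))⁻¹ * ∑ i : Fin d, (exc σ t (up x i) + exc σ t (dn x i))

lemma exc_nonneg (σ : Cfg d) (t : ℕ) (x : Idx d) : 0 ≤ exc σ t x := le_max_right _ _

lemma inflow_nonneg (σ : Cfg d) (t : ℕ) (x : Idx d) : 0 ≤ inflow σ t x := by
  apply mul_nonneg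
  · positivity
  · exact Finset.sum_nonneg fun i _ => add_nonneg (exc_nonneg _ _ _) (exc_nonneg _ _ _)

lemma latLap_eq (hd : 1 ≤ d) (f : Cfg d) (x : Idx d) :
    latLap d f x = (2 * (d : ℝ))⁻¹ * (∑ i : Fin d, (f (Function.update x i (x i + 1))
      + f (Function.update x i (x i - 1)))) - f x := by
  have hd0 : (d : ℝ) ≠ 0 := by
    have : 0 < d := hd
    positivity
  have h : ∑ i : Fin d,
      ((f (Function.update x i (x i + 1)) - f x) + (f (Function.update x i (x i - 1)) - f x))
      = (∑ i : Fin d, (f (Function.update x i (x i + 1)) + f (Function.update x i (x i - 1))))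
        - (2 * (d : ℝ)) * f x := by
    have : ∀ i : Fin d,
        (f (Function.update x i (x i + 1)) - f x) + (f (Function.update x i (x i - 1)) - f x)
        = (f (Function.update x i (x i + 1)) + f (Function.update x i (x i - 1))) - 2 * f x := by
      intro i; ring
    rw [Finset.sum_congr rfl (fun i _ => this i), Finset.sum_sub_distrib]
    simp [Finset.card_univ]
    ring
  rw [latLap, h, mul_sub]
  congr 1
  field_simp


lemma conf_succ (hd : 1 ≤ d) (σ : Cfg d) (t : ℕ) (x : Idx d) :
    latConf d σ (t + 1) x = min (latConf d σ t x) 1 + inflow σ t x := by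
  have : latConf d σ (t + 1) x
      = latConf d σ t x + latLap d (fun y => max (latConf d σ t y - 1) 0) x := rfl
  rw [this, latLap_eq hd]
  have hmm : ∀ a : ℝ, a - max (a - 1) 0 = min a 1 := by
    intro a
    rcases le_total a 1 with h | h
    · rw [max_eq_right (by linarith), min_eq_left h]; ring
    · rw [max_eq_left (by linarith), min_eq_right h]; ring
  have := hmm (latConf d σ t x)
  unfold inflow exc up dn
  linarith [hmm (latConf d σ t x)]

/-- the "level" min(s_t(x),1) explicit formula -/
lemma level_eq (hd : 1 ≤ d) (σ : Cfg d) (T : ℕ) (x : Idx d) :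
    min (latConf d σ T x) 1
      = min (min (σ x) 1 + ∑ t ∈ Finset.range T, inflow σ t x) 1 := by
  induction T with
  | zero => simp [latConf]
  | succ T ih =>
    have key : ∀ a c : ℝ, 0 ≤ c → min (min a 1 + c) 1 = min (a + c) 1 := by
      intro a c hc
      rcases le_total a 1 with h | h
      · rw [min_eq_left h]
      · rw [min_eq_right h, min_eq_right (by linarith), min_eq_right (by linarith)]
    rw [conf_succ hd, Finset.sum_range_succ, ih,
      key _ _ (inflow_nonneg σ T x), add_assoc]

lemma level_mono (hd : 1 ≤ d) (σ : Cfg d) (x : Idx d) {T T' : ℕ} (h : T ≤ T') :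
    min (latConf d σ T x) 1 ≤ min (latConf d σ T' x) 1 := by
  rw [level_eq hd, level_eq hd]
  apply min_le_min _ le_rfl
  have : ∑ t ∈ Finset.range T, inflow σ t x ≤ ∑ t ∈ Finset.range T', inflow σ t x :=
    Finset.sum_le_sum_of_subset_of_nonneg (Finset.range_subset_range.mpr h)
      (fun t _ _ => inflow_nonneg σ t x)
  linarith

lemma level_lb (hd : 1 ≤ d) (σ : Cfg d) (T : ℕ) (x : Idx d) :
    min (σ x) 1 ≤ min (latConf d σ T x) 1 := by
  have := level_mono hd σ x (Nat.zero_le T)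
  simpa [latConf] using this

lemma conf_lb (hd : 1 ≤ d) (σ : Cfg d) (T : ℕ) (x : Idx d) :
    min (σ x) 1 ≤ latConf d σ T x :=
  le_trans (level_lb hd σ T x) (min_le_left _ _)

/-- telescoping identity for the odometer -/
lemma sum_exc_eq (hd : 1 ≤ d) (σ : Cfg d) (T : ℕ) (x : Idx d) :
    ∑ t ∈ Finset.range T, exc σ (t + 1) x
      = ∑ t ∈ Finset.range T, inflow σ t x + min (σ x) 1 - min (latConf d σ T x) 1 := by
  induction T with
  | zero => simp [latConf]
  | succ T ih =>
    rw [Finset.sum_range_succ, Finset.sum_range_succ (f := fun t => inflow σ t x), ih]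
    have : exc σ (T + 1) x = latConf d σ (T+1) x - min (latConf d σ (T+1) x) 1 := by
      unfold exc
      rcases le_total (latConf d σ (T+1) x) 1 with h | h
      · rw [max_eq_right (by linarith), min_eq_left h]; ring
      · rw [max_eq_left (by linarith), min_eq_right h]
    rw [this, conf_succ hd]
    ring


lemma latOdo_mono (σ : Cfg d) (x : Idx d) {T T' : ℕ} (h : T ≤ T') :
    latOdo d σ T x ≤ latOdo d σ T' x :=
  Finset.sum_le_sum_of_subset_of_nonneg (Finset.range_subset_range.mpr h)
    (fun t _ _ => le_max_right _ _)

lemma iSup_ofReal_eq_top_iff {S : ℕ → ℝ} :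
    (⨆ T, ENNReal.ofReal (S T)) = ⊤ ↔ ∀ M : ℝ, ∃ T, M ≤ S T := by
  constructor
  · intro h M
    by_contra hM
    push_neg at hM
    have hle : (⨆ T, ENNReal.ofReal (S T)) ≤ ENNReal.ofReal M :=
      iSup_le fun T => ENNReal.ofReal_le_ofReal (hM T).le
    rw [h, top_le_iff] at hle
    exact ENNReal.ofReal_ne_top hle
  · intro h
    rw [iSup_eq_top]
    intro b hb
    obtain ⟨T, hT⟩ := h (b.toReal + 1)
    refine ⟨T, ?_⟩
    rw [ENNReal.lt_ofReal_iff_toReal_lt hb.ne]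
    linarith

/-- partial sums of inflow, as ℝ≥0∞-supremum -/
noncomputable def odoJ (σ : Cfg d) (x : Idx d) : ℝ≥0∞ :=
  ⨆ T : ℕ, ENNReal.ofReal (∑ t ∈ Finset.range T, inflow σ t x)

lemma odoInf_top_iff (σ : Cfg d) (x : Idx d) :
    latOdoInf d σ x = ⊤ ↔ ∀ M : ℝ, ∃ T, M ≤ latOdo d σ T x :=
  iSup_ofReal_eq_top_iff

lemma odoJ_top_iff (σ : Cfg d) (x : Idx d) :
    odoJ σ x = ⊤ ↔ ∀ M : ℝ, ∃ T, M ≤ ∑ t ∈ Finset.range T, inflow σ t x :=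
  iSup_ofReal_eq_top_iff

lemma inflow_sum_ge (hd : 1 ≤ d) (σ : Cfg d) (T : ℕ) (x : Idx d) :
    latOdo d σ (T + 1) x - exc σ 0 x ≤ ∑ t ∈ Finset.range T, inflow σ t x := by
  have h1 : latOdo d σ (T + 1) x = exc σ 0 x + ∑ t ∈ Finset.range T, exc σ (t + 1) x := by
    unfold latOdo exc
    rw [Finset.sum_range_succ']
    ring
  have h2 := sum_exc_eq hd σ T x
  have h3 := level_lb hd σ T x
  linarith

lemma exc_sum_ge (hd : 1 ≤ d) (σ : Cfg d) (T : ℕ) (x : Idx d) :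
    ∑ t ∈ Finset.range T, inflow σ t x + min (σ x) 1 - 1 ≤ latOdo d σ (T + 1) x := by
  have h1 : latOdo d σ (T + 1) x = exc σ 0 x + ∑ t ∈ Finset.range T, exc σ (t + 1) x := by
    unfold latOdo exc
    rw [Finset.sum_range_succ']
    ring
  have h2 := sum_exc_eq hd σ T x
  have h4 : min (latConf d σ T x) 1 ≤ 1 := min_le_right _ _
  have h5 : 0 ≤ exc σ 0 x := exc_nonneg σ 0 x
  linarith

lemma odoJ_top_of_top (hd : 1 ≤ d) (σ : Cfg d) (x : Idx d)
    (h : latOdoInf d σ x = ⊤) : odoJ σ x = ⊤ := by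
  rw [odoJ_top_iff]
  rw [odoInf_top_iff] at h
  intro M
  obtain ⟨T, hT⟩ := h (M + exc σ 0 x)
  refine ⟨T, ?_⟩
  have := inflow_sum_ge hd σ T x
  have := latOdo_mono σ x (Nat.le_succ T)
  linarith

lemma top_of_odoJ_top (hd : 1 ≤ d) (σ : Cfg d) (x : Idx d)
    (h : odoJ σ x = ⊤) : latOdoInf d σ x = ⊤ := by
  rw [odoInf_top_iff]
  rw [odoJ_top_iff] at h
  intro M
  obtain ⟨T, hT⟩ := h (M + 1 - min (σ x) 1)
  exact ⟨T + 1, by linarith [exc_sum_ge hd σ T x]⟩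

lemma dn_up (x : Idx d) (i : Fin d) : dn (up x i) i = x := by
  funext j
  unfold up dn
  by_cases h : j = i
  · subst h; simp
  · simp [Function.update_of_ne h]

lemma up_dn (x : Idx d) (i : Fin d) : up (dn x i) i = x := by
  funext j
  unfold up dn
  by_cases h : j = i
  · subst h; simp
  · simp [Function.update_of_ne h]

lemma top_neighbor (hd : 1 ≤ d) (σ : Cfg d) (x : Idx d) (i : Fin d)
    (h : latOdoInf d σ x = ⊤) (y : Idx d) (hy : y = up x i ∨ y = dn x i) :
    latOdoInf d σ y = ⊤ := by
  have hd0 : (0:ℝ) < 2 * (d:ℝ) := by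
    have : 0 < d := hd
    positivity
  apply top_of_odoJ_top hd
  rw [odoJ_top_iff]
  rw [odoInf_top_iff] at h
  intro M
  obtain ⟨T, hT⟩ := h (2 * (d:ℝ) * M)
  -- inflow at y dominates (2d)⁻¹ exc at x
  have key : ∀ t, (2 * (d:ℝ))⁻¹ * exc σ t x ≤ inflow σ t y := by
    intro t
    unfold inflow
    apply mul_le_mul_of_nonneg_left _ (le_of_lt (inv_pos.mpr hd0))
    have hterm : exc σ t x ≤ exc σ t (up y i) + exc σ t (dn y i) := by
      rcases hy with hy | hy
      · have : dn y i = x := by rw [hy, dn_up]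
        rw [this]
        linarith [exc_nonneg σ t (up y i)]
      · have : up y i = x := by rw [hy, up_dn]
        rw [this]
        linarith [exc_nonneg σ t (dn y i)]
    calc exc σ t x ≤ exc σ t (up y i) + exc σ t (dn y i) := hterm
      _ ≤ ∑ j : Fin d, (exc σ t (up y j) + exc σ t (dn y j)) :=
          Finset.single_le_sum (f := fun j => exc σ t (up y j) + exc σ t (dn y j))
            (fun j _ => add_nonneg (exc_nonneg _ _ _) (exc_nonneg _ _ _)) (Finset.mem_univ i)
  have hsum : (2 * (d:ℝ))⁻¹ * latOdo d σ T x ≤ ∑ t ∈ Finset.range T, inflow σ t y := by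
    unfold latOdo
    rw [Finset.mul_sum]
    exact Finset.sum_le_sum fun t _ => key t
  have : (2 * (d:ℝ))⁻¹ * (2 * (d:ℝ) * M) ≤ (2 * (d:ℝ))⁻¹ * latOdo d σ T x :=
    mul_le_mul_of_nonneg_left hT (le_of_lt (inv_pos.mpr hd0))
  rw [inv_mul_cancel_left₀ (ne_of_gt hd0)] at this
  exact ⟨T, le_trans this hsum⟩


lemma top_all (hd : 1 ≤ d) (σ : Cfg d) :
    ∀ (n : ℕ) (x y : Idx d), (∑ j : Fin d, (y j - x j).natAbs) = n →
      latOdoInf d σ x = ⊤ → latOdoInf d σ y = ⊤ := by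
  intro n
  induction n with
  | zero =>
    intro x y hsum hx
    have : ∀ j : Fin d, (y j - x j).natAbs = 0 := by
      intro j
      exact Finset.sum_eq_zero_iff.mp hsum j (Finset.mem_univ j)
    have hxy : y = x := by
      funext j
      have := this j
      omega
    rwa [hxy]
  | succ n ih =>
    intro x y hsum hx
    have hne : ∃ j : Fin d, (y j - x j).natAbs ≠ 0 := by
      by_contra hc
      push_neg at hc
      rw [Finset.sum_eq_zero (fun j _ => hc j)] at hsum
      omega
    obtain ⟨j, hj⟩ := hne
    set v : ℤ := if x j < y j then x j + 1 else x j - 1 with hv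
    set x' : Idx d := Function.update x j v with hx'
    have hstep : latOdoInf d σ x' = ⊤ := by
      rcases lt_or_ge (x j) (y j) with hlt | hle
      · have : x' = up x j := by
          rw [hx', hv, if_pos hlt]; rfl
        rw [this]
        exact top_neighbor hd σ x j hx _ (Or.inl rfl)
      · have : x' = dn x j := by
          have hne2 : x j ≠ y j := by omega
          rw [hx', hv, if_neg (not_lt.mpr hle)]; rfl
        rw [this]
        exact top_neighbor hd σ x j hx _ (Or.inr rfl)
    apply ih x' y _ hstep
    have hupd : ∀ k : Fin d, (y k - x' k).natAbs
        = if k = j then (y j - x j).natAbs - 1 else (y k - x k).natAbs := by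
      intro k
      by_cases hk : k = j
      · subst hk
        simp only [hx', Function.update_self, if_pos rfl, hv]
        split_ifs with h1
        · omega
        · omega
      · simp [hx', Function.update_of_ne hk, hk]
    calc ∑ k : Fin d, (y k - x' k).natAbs
        = ∑ k : Fin d, (if k = j then (y j - x j).natAbs - 1 else (y k - x k).natAbs) :=
          Finset.sum_congr rfl fun k _ => hupd k
      _ = n := by
          have herase : ∑ k ∈ Finset.univ.erase j,
              (if k = j then (y j - x j).natAbs - 1 else (y k - x k).natAbs)
              = ∑ k ∈ Finset.univ.erase j, (y k - x k).natAbs := by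
            apply Finset.sum_congr rfl
            intro k hk
            rw [if_neg (Finset.ne_of_mem_erase hk)]
          rw [← Finset.add_sum_erase Finset.univ _ (Finset.mem_univ j), herase, if_pos rfl]
          rw [← Finset.add_sum_erase Finset.univ
            (fun k => (y k - x k).natAbs) (Finset.mem_univ j)] at hsum
          omega

lemma eventually_ge_one (hd : 1 ≤ d) (σ : Cfg d) (x : Idx d)
    (h : odoJ σ x = ⊤) : ∃ T0 : ℕ, ∀ T, T0 ≤ T → 1 ≤ latConf d σ T x := by
  rw [odoJ_top_iff] at h
  obtain ⟨T0, hT0⟩ := h (1 - min (σ x) 1)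
  refine ⟨T0, fun T hT => ?_⟩
  have hmono : ∑ t ∈ Finset.range T0, inflow σ t x ≤ ∑ t ∈ Finset.range T, inflow σ t x :=
    Finset.sum_le_sum_of_subset_of_nonneg (Finset.range_subset_range.mpr hT)
      (fun t _ _ => inflow_nonneg σ t x)
  have hlev := level_eq hd σ T x
  have h1 : 1 ≤ min (σ x) 1 + ∑ t ∈ Finset.range T, inflow σ t x := by linarith
  rw [min_eq_right h1] at hlev
  have := min_le_left (latConf d σ T x) 1
  linarith [hlev.symm.le, min_le_left (latConf d σ T x) 1]


/-! ### translation -/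

def shf (z : Idx d) (σ : Cfg d) : Cfg d := fun x => σ (x + z)

lemma measurable_shf (z : Idx d) : Measurable (shf (d := d) z) :=
  measurable_pi_lambda _ (fun x => measurable_pi_apply (x + z))

lemma update_add (x z : Idx d) (i : Fin d) (v : ℤ) :
    Function.update x i v + z = Function.update (x + z) i (v + z i) := by
  funext j
  by_cases h : j = i
  · subst h; simp
  · simp [Function.update_of_ne h]

lemma latLap_shf (f : Cfg d) (z x : Idx d) :
    latLap d (fun y => f (y + z)) x = latLap d f (x + z) := by
  unfold latLap
  congr 1
  apply Finset.sum_congr rfl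
  intro i _
  have h1 : Function.update x i (x i + 1) + z = Function.update (x + z) i ((x + z) i + 1) := by
    rw [update_add]
    congr 1
    simp [add_right_comm]
  have h2 : Function.update x i (x i - 1) + z = Function.update (x + z) i ((x + z) i - 1) := by
    rw [update_add]
    congr 1
    simp [sub_add_eq_add_sub]
  simp only []
  rw [h1, h2]

lemma latConf_shf (z : Idx d) (σ : Cfg d) (t : ℕ) (x : Idx d) :
    latConf d (shf z σ) t x = latConf d σ t (x + z) := by
  induction t generalizing x with
  | zero => rfl
  | succ t ih =>
    show latConf d (shf z σ) t x + latLap d (fun y => max (latConf d (shf z σ) t y - 1) 0) x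
      = latConf d σ t (x + z) + latLap d (fun y => max (latConf d σ t y - 1) 0) (x + z)
    rw [ih x]
    congr 1
    have : (fun y => max (latConf d (shf z σ) t y - 1) 0)
        = (fun y => max (latConf d σ t (y + z) - 1) 0) := by
      funext y; rw [ih y]
    rw [this]
    exact latLap_shf (fun y => max (latConf d σ t y - 1) 0) z x

lemma latOdo_shf (z : Idx d) (σ : Cfg d) (T : ℕ) (x : Idx d) :
    latOdo d (shf z σ) T x = latOdo d σ T (x + z) := by
  unfold latOdo
  exact Finset.sum_congr rfl fun t _ => by rw [latConf_shf]

lemma latOdoInf_shf (z : Idx d) (σ : Cfg d) (x : Idx d) :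
    latOdoInf d (shf z σ) x = latOdoInf d σ (x + z) := by
  unfold latOdoInf
  exact iSup_congr fun T => by rw [latOdo_shf]

/-! ### measurability on configuration space -/

lemma measurable_conf (t : ℕ) (x : Idx d) :
    Measurable (fun σ : Cfg d => latConf d σ t x) := by
  induction t generalizing x with
  | zero => exact measurable_pi_apply x
  | succ t ih =>
    show Measurable (fun σ : Cfg d => latConf d σ t x
      + latLap d (fun y => max (latConf d σ t y - 1) 0) x)
    apply (ih x).add
    unfold latLap
    apply Measurable.const_mul
    apply Finset.measurable_sum
    intro i _
    have he : ∀ y : Idx d, Measurable (fun σ : Cfg d => max (latConf d σ t y - 1) 0) :=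
      fun y => ((ih y).sub measurable_const).max measurable_const
    exact (((he _).sub (he x)).add ((he _).sub (he x)))

lemma measurable_exc (t : ℕ) (x : Idx d) :
    Measurable (fun σ : Cfg d => exc σ t x) :=
  ((measurable_conf t x).sub measurable_const).max measurable_const

lemma measurable_odoInf (x : Idx d) :
    Measurable (fun σ : Cfg d => latOdoInf d σ x) := by
  apply Measurable.iSup
  intro T
  apply ENNReal.measurable_ofReal.comp
  unfold latOdo
  exact Finset.measurable_sum _ fun t _ =>
    ((measurable_conf t x).sub measurable_const).max measurable_const

/-! ### the non-stabilization event -/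

def NSet (d : ℕ) : Set (Cfg d) := {σ | ∃ x : Idx d, latOdoInf d σ x = ⊤}

lemma measurableSet_NSet : MeasurableSet (NSet d) := by
  have : NSet d = ⋃ x : Idx d, {σ | latOdoInf d σ x = ⊤} := by
    ext σ; simp [NSet]
  rw [this]
  exact MeasurableSet.iUnion fun x => (measurable_odoInf x) (measurableSet_singleton ⊤)

lemma NSet_shf_invariant (z : Idx d) : shf z ⁻¹' (NSet d) = NSet d := by
  ext σ
  constructor
  · rintro ⟨x, hx⟩
    rw [latOdoInf_shf] at hx
    exact ⟨x + z, hx⟩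
  · rintro ⟨x, hx⟩
    refine ⟨x - z, ?_⟩
    show latOdoInf d (shf z σ) (x - z) = ⊤
    rw [latOdoInf_shf, sub_add_cancel]
    exact hx

/-- On the non-stabilization event, every site's configuration is eventually ≥ 1. -/
lemma NSet_eventually_ge_one (hd : 1 ≤ d) (σ : Cfg d) (hσ : σ ∈ NSet d) (x : Idx d) :
    ∃ T0 : ℕ, ∀ T, T0 ≤ T → 1 ≤ latConf d σ T x := by
  obtain ⟨x0, hx0⟩ := hσ
  have hall : latOdoInf d σ x = ⊤ :=
    top_all hd σ _ x0 x rfl hx0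
  exact eventually_ge_one hd σ x (odoJ_top_of_top hd σ x hall)


/-! ### probabilistic layer -/

section Prob

variable {Ω : Type} [mΩ : MeasurableSpace Ω] {μ : Measure Ω}

lemma map_tuple_eq_pi [IsProbabilityMeasure μ]
    (s : Idx d → Ω → ℝ) (hmeas : ∀ x, Measurable (s x))
    (hindep : iIndepFun s μ)
    (hident : ∀ x y, IdentDistrib (s x) (s y) μ μ)
    {κ : Type} [Fintype κ] (g : κ → Idx d) (hg : Function.Injective g) :
    μ.map (fun ω (k : κ) => s (g k) ω) = Measure.pi (fun _ => μ.map (s 0)) := by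
  haveI : IsProbabilityMeasure (μ.map (s 0)) :=
    Measure.isProbabilityMeasure_map (hmeas 0).aemeasurable
  symm
  apply Measure.pi_eq
  intro S hS
  rw [Measure.map_apply (measurable_pi_lambda _ fun k => hmeas (g k))
    (MeasurableSet.univ_pi hS)]
  classical
  set sets : Idx d → Set ℝ := fun y => if h : ∃ k, g k = y then S h.choose else Set.univ
    with hsets
  have hsets_g : ∀ k : κ, sets (g k) = S k := by
    intro k
    have h : ∃ k', g k' = g k := ⟨k, rfl⟩
    rw [hsets]
    simp only [dif_pos h]
    exact congrArg S (hg h.choose_spec)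
  have hFg : ∀ y ∈ Finset.univ.map ⟨g, hg⟩, MeasurableSet (sets y) := by
    intro y _
    show MeasurableSet (if h : ∃ k, g k = y then S h.choose else Set.univ)
    split_ifs with h
    · exact hS _
    · exact MeasurableSet.univ
  have hpre : (fun ω (k : κ) => s (g k) ω) ⁻¹' Set.univ.pi S
      = ⋂ y ∈ Finset.univ.map ⟨g, hg⟩, s y ⁻¹' sets y := by
    ext ω
    simp only [Set.mem_preimage, Set.mem_univ_pi, Set.mem_iInter, Finset.mem_map,
      Finset.mem_univ, true_and, Function.Embedding.coeFn_mk]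
    constructor
    · rintro h y ⟨k, rfl⟩
      rw [hsets_g k]
      exact h k
    · intro h k
      rw [← hsets_g k]
      exact h (g k) ⟨k, rfl⟩
  rw [hpre, hindep.measure_inter_preimage_eq_mul _ hFg, Finset.prod_map]
  apply Finset.prod_congr rfl
  intro k _
  simp only [Function.Embedding.coeFn_mk]
  rw [hsets_g k]
  rw [← Measure.map_apply (hmeas (g k)) (hS k), (hident (g k) 0).map_eq]


variable [IsProbabilityMeasure μ] (s : Idx d → Ω → ℝ)

lemma measurable_field (hmeas : ∀ x, Measurable (s x)) :
    Measurable (fun ω (x : Idx d) => s x ω) :=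
  measurable_pi_lambda _ (fun x => hmeas x)

lemma map_field_shf (hmeas : ∀ x, Measurable (s x))
    (hindep : iIndepFun s μ)
    (hident : ∀ x y, IdentDistrib (s x) (s y) μ μ) (z : Idx d) :
    (μ.map (fun ω (x : Idx d) => s x ω)).map (shf z) = μ.map (fun ω (x : Idx d) => s x ω) := by
  have hfield : Measurable (fun ω (x : Idx d) => s x ω) := measurable_field s hmeas
  haveI : IsProbabilityMeasure (μ.map (fun ω (x : Idx d) => s x ω)) :=
    Measure.isProbabilityMeasure_map hfield.aemeasurable
  haveI : IsProbabilityMeasure ((μ.map (fun ω (x : Idx d) => s x ω)).map (shf z)) :=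
    Measure.isProbabilityMeasure_map (measurable_shf z).aemeasurable
  apply ext_of_generate_finite (measurableCylinders (fun _ : Idx d => ℝ))
    generateFrom_measurableCylinders.symm isPiSystem_measurableCylinders
    _ (by simp [measure_univ])
  intro A hA
  have hcylm0 : MeasurableSet A := MeasurableSet.of_mem_measurableCylinders hA
  obtain ⟨J, S, hSm, rfl⟩ := (mem_measurableCylinders _).mp hA
  have hcylm : MeasurableSet (cylinder (α := fun _ : Idx d => ℝ) J S) := hcylm0
  have hg1 : Function.Injective (fun i : {x // x ∈ J} => (i : Idx d) + z) := by
    intro a b hab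
    exact Subtype.coe_injective (by simpa using hab)
  have hg2 : Function.Injective (fun i : {x // x ∈ J} => (i : Idx d)) :=
    Subtype.coe_injective
  have hL : shf z ⁻¹' cylinder J S = (fun σ (i : {x // x ∈ J}) => σ ((i : Idx d) + z)) ⁻¹' S := by
    rfl
  have hmtup : Measurable (fun σ : Cfg d => (fun i : {x // x ∈ J} => σ ((i : Idx d) + z))) :=
    measurable_pi_lambda (fun σ : Cfg d => (fun i : {x // x ∈ J} => σ ((i : Idx d) + z)))
      (fun i => measurable_pi_apply ((i : Idx d) + z))
  rw [Measure.map_apply (measurable_shf z) hcylm, hL,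
    Measure.map_apply hfield (hmtup hSm),
    Measure.map_apply hfield hcylm]
  have hcomp1 : (fun ω (x : Idx d) => s x ω) ⁻¹'
      ((fun σ (i : {x // x ∈ J}) => σ ((i : Idx d) + z)) ⁻¹' S)
      = (fun ω (i : {x // x ∈ J}) => s ((i : Idx d) + z) ω) ⁻¹' S := rfl
  have hcomp2 : (fun ω (x : Idx d) => s x ω) ⁻¹' cylinder J S
      = (fun ω (i : {x // x ∈ J}) => s (i : Idx d) ω) ⁻¹' S := rfl
  rw [hcomp1, hcomp2,
    ← Measure.map_apply (measurable_pi_lambda _ fun i => hmeas _) hSm,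
    ← Measure.map_apply (measurable_pi_lambda _ fun i => hmeas _) hSm,
    map_tuple_eq_pi s hmeas hindep hident _ hg1,
    map_tuple_eq_pi s hmeas hindep hident _ hg2]


lemma integrable_coord (hmeas : ∀ x, Measurable (s x))
    (hident : ∀ x y, IdentDistrib (s x) (s y) μ μ) (hint : Integrable (s 0) μ) (x : Idx d) :
    Integrable (fun σ : Cfg d => σ x) (μ.map (fun ω (x : Idx d) => s x ω)) := by
  rw [integrable_map_measure (measurable_pi_apply x).aestronglyMeasurable
    (measurable_field s hmeas).aemeasurable]
  exact (hident x 0).integrable_iff.mpr hint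

lemma integrable_conf (hmeas : ∀ x, Measurable (s x))
    (hident : ∀ x y, IdentDistrib (s x) (s y) μ μ) (hint : Integrable (s 0) μ)
    (t : ℕ) (x : Idx d) :
    Integrable (fun σ : Cfg d => latConf d σ t x) (μ.map (fun ω (x : Idx d) => s x ω)) := by
  induction t generalizing x with
  | zero => exact integrable_coord s hmeas hident hint x
  | succ t ih =>
    show Integrable (fun σ : Cfg d => latConf d σ t x
      + latLap d (fun y => max (latConf d σ t y - 1) 0) x) _
    apply (ih x).add
    simp only [latLap]
    apply Integrable.const_mul
    apply integrable_finset_sum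
    intro i _
    have he : ∀ y : Idx d, Integrable (fun σ : Cfg d => max (latConf d σ t y - 1) 0)
        (μ.map (fun ω (x : Idx d) => s x ω)) :=
      fun y => ((ih y).sub (integrable_const 1)).pos_part
    exact ((he _).sub (he x)).add ((he _).sub (he x))

lemma integrable_exc (hmeas : ∀ x, Measurable (s x))
    (hident : ∀ x y, IdentDistrib (s x) (s y) μ μ) (hint : Integrable (s 0) μ)
    (t : ℕ) (x : Idx d) :
    Integrable (fun σ : Cfg d => exc σ t x) (μ.map (fun ω (x : Idx d) => s x ω)) :=
  ((integrable_conf s hmeas hident hint t x).sub (integrable_const 1)).pos_part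


lemma restrict_shf (hmeas : ∀ x, Measurable (s x))
    (hindep : iIndepFun s μ)
    (hident : ∀ x y, IdentDistrib (s x) (s y) μ μ) (z : Idx d) :
    ((μ.map (fun ω (x : Idx d) => s x ω)).restrict (NSet d)).map (shf z)
      = (μ.map (fun ω (x : Idx d) => s x ω)).restrict (NSet d) := by
  apply Measure.ext
  intro D hD
  rw [Measure.map_apply (measurable_shf z) hD, Measure.restrict_apply hD,
    Measure.restrict_apply ((measurable_shf z) hD)]
  have h1 : shf z ⁻¹' D ∩ NSet d = shf z ⁻¹' (D ∩ NSet d) := by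
    rw [Set.preimage_inter, NSet_shf_invariant]
  rw [h1, ← Measure.map_apply (measurable_shf z) (hD.inter measurableSet_NSet),
    map_field_shf s hmeas hindep hident z]

lemma integral_shf_restrict (hmeas : ∀ x, Measurable (s x))
    (hindep : iIndepFun s μ)
    (hident : ∀ x y, IdentDistrib (s x) (s y) μ μ) (z : Idx d)
    (f : Cfg d → ℝ) (hf : Measurable f) :
    ∫ σ, f (shf z σ) ∂((μ.map (fun ω (x : Idx d) => s x ω)).restrict (NSet d))
      = ∫ σ, f σ ∂((μ.map (fun ω (x : Idx d) => s x ω)).restrict (NSet d)) := by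
  have h := restrict_shf s hmeas hindep hident z
  calc ∫ σ, f (shf z σ) ∂((μ.map (fun ω (x : Idx d) => s x ω)).restrict (NSet d))
      = ∫ σ, f σ ∂(((μ.map (fun ω (x : Idx d) => s x ω)).restrict (NSet d)).map (shf z)) :=
        (integral_map (measurable_shf z).aemeasurable hf.aestronglyMeasurable).symm
    _ = ∫ σ, f σ ∂((μ.map (fun ω (x : Idx d) => s x ω)).restrict (NSet d)) := by rw [h]

lemma exc_integral_eq (hmeas : ∀ x, Measurable (s x))
    (hindep : iIndepFun s μ)
    (hident : ∀ x y, IdentDistrib (s x) (s y) μ μ) (t : ℕ) (y : Idx d) :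
    ∫ σ, exc σ t y ∂((μ.map (fun ω (x : Idx d) => s x ω)).restrict (NSet d))
      = ∫ σ, exc σ t 0 ∂((μ.map (fun ω (x : Idx d) => s x ω)).restrict (NSet d)) := by
  have hfun : (fun σ : Cfg d => exc σ t y) = fun σ => exc (shf y σ) t 0 := by
    funext σ
    unfold exc
    rw [latConf_shf, zero_add]
  rw [hfun]
  exact integral_shf_restrict s hmeas hindep hident y _ (measurable_exc t 0)

lemma coord_integral_eq (hmeas : ∀ x, Measurable (s x))
    (hindep : iIndepFun s μ)
    (hident : ∀ x y, IdentDistrib (s x) (s y) μ μ) (y : Idx d) :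
    ∫ σ, σ y ∂((μ.map (fun ω (x : Idx d) => s x ω)).restrict (NSet d))
      = ∫ σ, σ 0 ∂((μ.map (fun ω (x : Idx d) => s x ω)).restrict (NSet d)) := by
  have hfun : (fun σ : Cfg d => σ y) = fun σ => (shf y σ) 0 := by
    funext σ
    show σ y = σ (0 + y)
    rw [zero_add]
  rw [hfun]
  exact integral_shf_restrict s hmeas hindep hident y _ (measurable_pi_apply 0)

lemma conf_integral_const (hmeas : ∀ x, Measurable (s x))
    (hindep : iIndepFun s μ)
    (hident : ∀ x y, IdentDistrib (s x) (s y) μ μ) (hint : Integrable (s 0) μ) (t : ℕ) :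
    ∫ σ, latConf d σ t 0 ∂((μ.map (fun ω (x : Idx d) => s x ω)).restrict (NSet d))
      = ∫ σ, σ 0 ∂((μ.map (fun ω (x : Idx d) => s x ω)).restrict (NSet d)) := by
  set νA := (μ.map (fun ω (x : Idx d) => s x ω)).restrict (NSet d) with hνA
  induction t with
  | zero => rfl
  | succ t ih =>
    have hIc : ∀ x : Idx d, Integrable (fun σ : Cfg d => latConf d σ t x) νA :=
      fun x => (integrable_conf s hmeas hident hint t x).restrict
    have hIe : ∀ x : Idx d, Integrable (fun σ : Cfg d => exc σ t x) νA :=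
      fun x => (integrable_exc s hmeas hident hint t x).restrict
    have h1 : ∀ σ : Cfg d, latConf d σ (t+1) 0 = latConf d σ t 0
        + (2*(d:ℝ))⁻¹ * ∑ i : Fin d,
          ((exc σ t (up 0 i) - exc σ t 0) + (exc σ t (dn 0 i) - exc σ t 0)) := by
      intro σ
      show latConf d σ t 0 + latLap d (fun y => max (latConf d σ t y - 1) 0) 0 = _
      unfold latLap exc up dn
      rfl
    have h2 : (fun σ : Cfg d => latConf d σ (t+1) 0) = fun σ => latConf d σ t 0
        + (2*(d:ℝ))⁻¹ * ∑ i : Fin d,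
          ((exc σ t (up 0 i) - exc σ t 0) + (exc σ t (dn 0 i) - exc σ t 0)) :=
      funext h1
    rw [h2]
    have hIsum : Integrable (fun σ : Cfg d => ∑ i : Fin d,
        ((exc σ t (up 0 i) - exc σ t 0) + (exc σ t (dn 0 i) - exc σ t 0))) νA := by
      apply integrable_finset_sum
      intro i _
      exact ((hIe _).sub (hIe 0)).add ((hIe _).sub (hIe 0))
    rw [integral_add (hIc 0) (hIsum.const_mul _), integral_const_mul]
    have hsum0 : ∫ a, (∑ i : Fin d,
        (exc a t (up 0 i) - exc a t 0 + (exc a t (dn 0 i) - exc a t 0))) ∂νA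
        = ∑ i : Fin d, ∫ a, (exc a t (up 0 i) - exc a t 0
            + (exc a t (dn 0 i) - exc a t 0)) ∂νA :=
      integral_finset_sum _ (fun i _ => ((hIe _).sub (hIe 0)).add ((hIe _).sub (hIe 0)))
    rw [hsum0]
    have hz : ∀ i : Fin d, ∫ σ, ((exc σ t (up 0 i) - exc σ t 0)
        + (exc σ t (dn 0 i) - exc σ t 0)) ∂νA = 0 := by
      intro i
      have hIa : Integrable (fun σ : Cfg d => exc σ t (up 0 i) - exc σ t 0) νA :=
        (hIe _).sub (hIe 0)
      have hIb : Integrable (fun σ : Cfg d => exc σ t (dn 0 i) - exc σ t 0) νA :=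
        (hIe _).sub (hIe 0)
      rw [integral_add hIa hIb, integral_sub (hIe _) (hIe 0), integral_sub (hIe _) (hIe 0),
        exc_integral_eq s hmeas hindep hident t (up 0 i),
        exc_integral_eq s hmeas hindep hident t (dn 0 i)]
      ring
    rw [Finset.sum_congr rfl (fun i _ => hz i)]
    simp [ih]

end Prob

end SubSand

open SubSand Filter Topology

/-- **Subcritical stabilization on `ℤ^d`.** If `(s(x))_{x ∈ ℤ^d}` are i.i.d.
with `E[|s(0)|] < ∞` and `E[s(0)] < 1`, then almost surely `s` stabilizes under parallel
toppling: `u_∞(x) < ∞` for every `x`. -/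
theorem subcritical_sandpile_stabilizes (d : ℕ) (hd : 1 ≤ d)
    (Ω : Type) (mΩ : MeasurableSpace Ω) (μ : Measure Ω) (hμ : IsProbabilityMeasure μ)
    (s : (Fin d → ℤ) → Ω → ℝ)
    (hmeas : ∀ x, Measurable (s x))
    (hindep : iIndepFun s μ)
    (hident : ∀ x y, IdentDistrib (s x) (s y) μ μ)
    (hint : Integrable (s 0) μ)
    (hmean : ∫ ω, s 0 ω ∂μ < 1) :
    ∀ᵐ ω ∂μ, ∀ x : Fin d → ℤ, latOdoInf d (fun y => s y ω) x < ⊤ := by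
  classical
  have hfield : Measurable (fun ω (x : Idx d) => s x ω) := measurable_field s hmeas
  set m : ℝ := ∫ ω, s 0 ω ∂μ with hm
  set ν : Measure (Cfg d) := μ.map (fun ω (x : Idx d) => s x ω) with hν
  haveI : IsProbabilityMeasure ν := Measure.isProbabilityMeasure_map hfield.aemeasurable
  set νA : Measure (Cfg d) := ν.restrict (NSet d) with hνA
  have key : ν (NSet d) = 0 := by
    by_contra hq0
    have hqpos : 0 < (ν (NSet d)).toReal := ENNReal.toReal_pos hq0 (measure_ne_top _ _)
    set q : ℝ := (ν (NSet d)).toReal with hqdef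
    set κ : ℝ := ∫ σ, σ 0 ∂νA with hκ
    have hcoordA : ∀ y : Idx d, Integrable (fun σ : Cfg d => σ y) νA :=
      fun y => (integrable_coord s hmeas hident hint y).restrict
    have hcons : ∀ t, ∫ σ, latConf d σ t 0 ∂νA = κ :=
      fun t => conf_integral_const s hmeas hindep hident hint t
    -- LLN setup
    haveI : Infinite (Idx d) :=
      Infinite.of_injective (fun n : ℤ => (fun _ => n : Idx d))
        (fun a b h => congrFun h ⟨0, hd⟩)
    haveI : Denumerable (Idx d) := Denumerable.ofEncodableOfInfinite _
    set e : ℕ ≃ Idx d := (Denumerable.eqv (Idx d)).symm with he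
    set X : ℕ → Ω → ℝ := fun i => s (e i) with hX
    have hint0 : Integrable (X 0) μ := (hident (e 0) 0).integrable_iff.mpr hint
    have hLLN := strong_law_Lp (le_refl (1:ℝ≥0∞)) (by simp : (1:ℝ≥0∞) ≠ ⊤) X
      (memLp_one_iff_integrable.mpr hint0)
      (fun i j hij => hindep.indepFun (fun hc => hij (e.injective hc)))
      (fun i => hident _ _)
    have hEX : (∫ ω, X 0 ω ∂μ) = m := (hident (e 0) 0).integral_eq
    set A : ℕ → Cfg d → ℝ :=
      fun n σ => (n:ℝ)⁻¹ • (∑ i ∈ Finset.range n, σ (e i)) - m with hA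
    have hAmeas : ∀ n, Measurable (A n) := fun n =>
      ((Finset.measurable_sum _ (fun i _ => measurable_pi_apply (e i))).const_smul
        ((n:ℝ)⁻¹)).sub measurable_const
    have hAint : ∀ n, Integrable (A n) ν := fun n =>
      ((integrable_finset_sum _
        (fun i _ => integrable_coord s hmeas hident hint (e i))).smul
          ((n:ℝ)⁻¹)).sub (integrable_const m)
    have hbound : ∀ n, |∫ σ, A n σ ∂νA|
        ≤ (eLpNorm (fun ω => (n:ℝ)⁻¹ • (∑ i ∈ Finset.range n, X i ω) - m) 1 μ).toReal := by
      intro n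
      have h1 : |∫ σ, A n σ ∂νA| ≤ ∫ σ, |A n σ| ∂νA := by
        simpa [Real.norm_eq_abs] using norm_integral_le_integral_norm (μ := νA) (A n)
      have h2 : ∫ σ, |A n σ| ∂νA ≤ ∫ σ, |A n σ| ∂ν :=
        integral_mono_measure Measure.restrict_le_self
          (Filter.Eventually.of_forall fun σ => abs_nonneg _) ((hAint n).abs)
      have h3 : ∫ σ, |A n σ| ∂ν = ∫ ω, |A n (fun x => s x ω)| ∂μ := by
        rw [hν, integral_map hfield.aemeasurable ((hAmeas n).abs.aestronglyMeasurable)]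
      have hm2 : AEStronglyMeasurable
          (fun ω => (n:ℝ)⁻¹ • (∑ i ∈ Finset.range n, X i ω) - m) μ :=
        (((Finset.measurable_sum _ (fun i _ => hmeas (e i))).const_smul
          ((n:ℝ)⁻¹)).sub measurable_const).aestronglyMeasurable
      have h4 : ∫ ω, |A n (fun x => s x ω)| ∂μ
          = (eLpNorm (fun ω => (n:ℝ)⁻¹ • (∑ i ∈ Finset.range n, X i ω) - m) 1 μ).toReal := by
        rw [eLpNorm_one_eq_lintegral_enorm]
        have heq : (fun ω => |A n (fun x => s x ω)|)
            = fun ω => ‖(n:ℝ)⁻¹ • (∑ i ∈ Finset.range n, X i ω) - m‖ := rfl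
        rw [heq, integral_norm_eq_lintegral_enorm hm2]
      linarith
    have hc : Tendsto (fun n : ℕ =>
        (eLpNorm (fun ω => (n:ℝ)⁻¹ • (∑ i ∈ Finset.range n, X i ω) - m) 1 μ).toReal)
        atTop (𝓝 0) := by
      have h0 : Tendsto (fun n : ℕ =>
          eLpNorm (fun ω => (n:ℝ)⁻¹ • (∑ i ∈ Finset.range n, X i ω) - m) 1 μ)
          atTop (𝓝 0) := by
        have := hLLN
        rw [hEX] at this
        exact this
      have := (ENNReal.tendsto_toReal (by simp : (0:ℝ≥0∞) ≠ ⊤)).comp h0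
      exact this
    have hval : ∀ n : ℕ, 1 ≤ n → ∫ σ, A n σ ∂νA = κ - m * q := by
      intro n hn
      have hn0 : (n:ℝ) ≠ 0 := by positivity
      have hsumint : Integrable (fun σ : Cfg d => ∑ i ∈ Finset.range n, σ (e i)) νA :=
        integrable_finset_sum _ (fun i _ => hcoordA _)
      have huniv : ∫ σ, (1:ℝ) ∂νA = q := by
        rw [integral_const]
        simp [hνA, Measure.restrict_apply_univ, smul_eq_mul, hqdef]
        rfl
      have hsm : Integrable (fun σ : Cfg d => (n:ℝ)⁻¹ • (∑ i ∈ Finset.range n, σ (e i))) νA :=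
        hsumint.smul ((n:ℝ)⁻¹)
      have h1 : ∫ σ, A n σ ∂νA
          = (n:ℝ)⁻¹ • (∫ σ, (∑ i ∈ Finset.range n, σ (e i)) ∂νA) - m * q := by
        rw [hA]
        rw [integral_sub hsm (integrable_const m), integral_smul,
          integral_const]
        simp [hνA, Measure.restrict_apply_univ, smul_eq_mul, hqdef]
        unfold Measure.real
        ring
      have h2 : ∫ σ, (∑ i ∈ Finset.range n, σ (e i)) ∂νA = n * κ := by
        rw [integral_finset_sum _ (fun i _ => hcoordA _),
          Finset.sum_congr rfl (fun i _ => coord_integral_eq s hmeas hindep hident (e i))]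
        simp [Finset.sum_const, nsmul_eq_mul, hκ]
        exact Or.inl rfl
      rw [h1, h2, smul_eq_mul, ← mul_assoc, inv_mul_cancel₀ hn0, one_mul]
    have hκval : κ = m * q := by
      have hT2 : Tendsto (fun n : ℕ => ∫ σ, A n σ ∂νA) atTop (𝓝 (κ - m * q)) := by
        apply Tendsto.congr' _ tendsto_const_nhds
        filter_upwards [Filter.eventually_ge_atTop 1] with n hn
        exact (hval n hn).symm
      have hT1 : Tendsto (fun n : ℕ => ∫ σ, A n σ ∂νA) atTop (𝓝 0) :=
        squeeze_zero_norm (fun n => by simpa [Real.norm_eq_abs] using hbound n) hc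
      have := tendsto_nhds_unique hT2 hT1
      linarith
    -- Fatou
    set β : Cfg d → ℝ := fun σ => min (σ 0) 1 with hβ
    have hβeq : β = fun σ => σ 0 - max (σ 0 - 1) 0 := by
      funext σ
      show min (σ 0) 1 = _
      rcases le_total (σ 0) 1 with h | h
      · rw [min_eq_left h, max_eq_right (by linarith)]; ring
      · rw [min_eq_right h, max_eq_left (by linarith)]; ring
    have hβmeas : Measurable β := (measurable_pi_apply 0).min measurable_const
    have hβint : Integrable β νA := by
      rw [hβeq]
      exact (hcoordA 0).sub (((hcoordA 0).sub (integrable_const 1)).pos_part)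
    set b : ℝ := ∫ σ, β σ ∂νA with hb
    have huniv : ∫ σ, (1:ℝ) ∂νA = q := by
      rw [integral_const]
      simp [hνA, Measure.restrict_apply_univ, smul_eq_mul, hqdef]
      rfl
    have hbq : b ≤ q := by
      rw [hb, ← huniv]
      exact integral_mono hβint (integrable_const 1) (fun σ => min_le_right _ _)
    have hκb : b ≤ κ := by
      rw [hb, hκ]
      exact integral_mono hβint (hcoordA 0) (fun σ => min_le_left _ _)
    have hg : ∀ t : ℕ, Measurable (fun σ : Cfg d => ENNReal.ofReal (latConf d σ t 0 - β σ)) :=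
      fun t => ENNReal.measurable_ofReal.comp ((measurable_conf t 0).sub hβmeas)
    have hFat := lintegral_liminf_le (μ := νA) (u := Filter.atTop) hg
    have hgint : ∀ t, ∫⁻ σ, ENNReal.ofReal (latConf d σ t 0 - β σ) ∂νA
        = ENNReal.ofReal (κ - b) := by
      intro t
      have hci : Integrable (fun σ : Cfg d => latConf d σ t 0) νA :=
        (integrable_conf s hmeas hident hint t 0).restrict
      have hci2 : Integrable (fun σ : Cfg d => latConf d σ t 0 - β σ) νA := hci.sub hβint
      rw [← ofReal_integral_eq_lintegral_ofReal hci2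
        (Filter.Eventually.of_forall fun σ => sub_nonneg.mpr (conf_lb hd σ t 0))]
      rw [integral_sub hci hβint, hcons t]
    have hRHS : (Filter.atTop.liminf fun t =>
        ∫⁻ σ, ENNReal.ofReal (latConf d σ t 0 - β σ) ∂νA) = ENNReal.ofReal (κ - b) := by
      rw [funext hgint]
      exact Filter.liminf_const _
    have haeNS : ∀ᵐ σ ∂νA, ENNReal.ofReal (1 - β σ)
        ≤ Filter.atTop.liminf (fun t => ENNReal.ofReal (latConf d σ t 0 - β σ)) := by
      filter_upwards [ae_restrict_mem measurableSet_NSet] with σ hσ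
      obtain ⟨T0, hT0⟩ := NSet_eventually_ge_one hd σ hσ 0
      exact Filter.le_liminf_of_le (by isBoundedDefault)
        (Filter.eventually_atTop.mpr
          ⟨T0, fun t ht => ENNReal.ofReal_le_ofReal (by linarith [hT0 t ht])⟩)
    have hLHS : ENNReal.ofReal (q - b)
        ≤ ∫⁻ σ, Filter.atTop.liminf (fun t => ENNReal.ofReal (latConf d σ t 0 - β σ)) ∂νA := by
      have h5 : ENNReal.ofReal (q - b) = ∫⁻ σ, ENNReal.ofReal (1 - β σ) ∂νA := by
        have hci2 : Integrable (fun σ : Cfg d => 1 - β σ) νA :=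
          (integrable_const 1).sub hβint
        rw [← ofReal_integral_eq_lintegral_ofReal hci2
          (Filter.Eventually.of_forall fun σ => sub_nonneg.mpr (min_le_right _ _))]
        rw [integral_sub (integrable_const 1) hβint, huniv]
      rw [h5]
      exact lintegral_mono_ae haeNS
    have hmain : ENNReal.ofReal (q - b) ≤ ENNReal.ofReal (m * q - b) := by
      calc ENNReal.ofReal (q - b)
          ≤ ∫⁻ σ, Filter.atTop.liminf
              (fun t => ENNReal.ofReal (latConf d σ t 0 - β σ)) ∂νA := hLHS
        _ ≤ Filter.atTop.liminf (fun t =>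
              ∫⁻ σ, ENNReal.ofReal (latConf d σ t 0 - β σ) ∂νA) := hFat
        _ = ENNReal.ofReal (κ - b) := hRHS
        _ = ENNReal.ofReal (m * q - b) := by rw [hκval]
    rcases lt_or_ge b q with hblt | hbge
    · by_cases hnn : 0 ≤ m * q - b
      · rw [ENNReal.ofReal_le_ofReal_iff hnn] at hmain
        nlinarith
      · push_neg at hnn
        have hz1 : ENNReal.ofReal (m * q - b) = 0 := ENNReal.ofReal_eq_zero.mpr hnn.le
        rw [hz1, le_zero_iff, ENNReal.ofReal_eq_zero] at hmain
        linarith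
    · have hbq' : b = q := le_antisymm hbq hbge
      have : κ < q := by
        rw [hκval]
        nlinarith
      linarith
  -- pull back
  have hpre : μ ((fun ω (x : Idx d) => s x ω) ⁻¹' (NSet d)) = 0 := by
    rw [← Measure.map_apply hfield measurableSet_NSet]
    exact key
  have haefin : ∀ᵐ ω ∂μ, (fun x : Idx d => s x ω) ∉ NSet d := by
    rw [ae_iff]
    have heq : {ω | ¬ (fun x : Idx d => s x ω) ∉ NSet d}
        = (fun ω (x : Idx d) => s x ω) ⁻¹' (NSet d) := by
      ext ω
      simp [Set.mem_preimage]
    rw [heq]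
    exact hpre
  filter_upwards [haefin] with ω hω x
  rw [lt_top_iff_ne_top]
  intro hx
  exact hω ⟨x, hx⟩
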